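/- Let f : ℝ → ℝ be convex and continuously differentiable, and suppose there is a constant β > 0 such that |f(t)| ≤ β(1 + t²) for all t ∈ ℝ. Then |f'(t)| ≤ 7β(1 + |t|) for all t ∈ ℝ. -/

import Mathlib

set_option maxHeartbeats 1000000 in
/-- Let `f : ℝ → ℝ` be convex and continuously differentiable, and suppose there
is a constant `β > 0` such that `|f t| ≤ β (1 + t²)` for all `t`. Then
`|f' t| ≤ 7 β (1 + |t|)` for all `t`. -/
theorem stmt_0 (f : ℝ → ℝ) (β : ℝ) (hβ : 0 < β)
    (hconv : ConvexOn ℝ Set.univ f) (hC1 : ContDiff ℝ 1 f)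
    (hgrowth : ∀ t : ℝ, |f t| ≤ β * (1 + t ^ 2)) :
    ∀ t : ℝ, |deriv f t| ≤ 7 * β * (1 + |t|) := by
  intro t
  have hdiff : ∀ x : ℝ, DifferentiableAt ℝ f x := fun x =>
    (hC1.differentiable one_ne_zero).differentiableAt
  set h : ℝ := 1 + |t| with hh
  have hs : 0 ≤ |t| := abs_nonneg t
  have hpos : 0 < h := by positivity
  have h1 : deriv f t ≤ slope f t (t + h) :=
    hconv.deriv_le_slope (Set.mem_univ _) (Set.mem_univ _) (by linarith) (hdiff t)
  have h2 : slope f (t - h) t ≤ deriv f t :=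
    hconv.slope_le_deriv (Set.mem_univ _) (Set.mem_univ _) (by linarith) (hdiff t)
  rw [slope_def_field] at h1 h2
  have ed1 : t + h - t = h := by ring
  have ed2 : t - (t - h) = h := by ring
  rw [ed1] at h1
  rw [ed2] at h2
  have e1 : deriv f t * h ≤ f (t + h) - f t := (le_div_iff₀ hpos).mp h1
  have e2 : f t - f (t - h) ≤ deriv f t * h := (div_le_iff₀ hpos).mp h2
  have g1 := abs_le.mp (hgrowth (t + h))
  have g2 := abs_le.mp (hgrowth (t - h))
  have g3 := abs_le.mp (hgrowth t)
  have hle : t ≤ |t| := le_abs_self t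
  have hge : -|t| ≤ t := neg_abs_le t
  have hsq : t ^ 2 = |t| ^ 2 := (sq_abs t).symm
  have hb1 : (t + h) ^ 2 ≤ (1 + 2 * |t|) ^ 2 := by rw [hh]; nlinarith
  have hb2 : (t - h) ^ 2 ≤ (1 + 2 * |t|) ^ 2 := by rw [hh]; nlinarith
  rw [abs_le]
  constructor
  · rw [← mul_le_mul_iff_of_pos_right hpos]
    calc (-(7 * β * (1 + |t|))) * h ≤ β * (2 + (1 + 2 * |t|) ^ 2 + |t| ^ 2) * (-1) := by
          rw [hh]; nlinarith [mul_nonneg hβ.le hs, mul_nonneg (mul_nonneg hβ.le hs) hs]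
      _ ≤ f t - f (t - h) := by
          nlinarith [mul_le_mul_of_nonneg_left hb2 hβ.le, g2.2, g3.1]
      _ ≤ deriv f t * h := e2
  · rw [← mul_le_mul_iff_of_pos_right hpos]
    calc deriv f t * h ≤ f (t + h) - f t := e1
      _ ≤ β * (2 + (1 + 2 * |t|) ^ 2 + |t| ^ 2) := by
          nlinarith [mul_le_mul_of_nonneg_left hb1 hβ.le, g1.2, g3.1]
      _ ≤ 7 * β * (1 + |t|) * h := by
          rw [hh]; nlinarith [mul_nonneg hβ.le hs, mul_nonneg (mul_nonneg hβ.le hs) hs]
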